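/- For every cardinal κ: κ < add(𝔛, 𝔇) if and only if for every κ-sequence ⟨(g_α, F_α) : α < κ⟩ such that each g_α ∈ ℕ^ℕ and the restriction F_α∥{n : 0 < g_α(n)} is large (all members infinite) and linearly quasiordered by ⊆*, there exists h ∈ ℕ^ℕ such that for each α the restriction F_α∥{n : g_α(n) ≤ h(n)} is large. -/

import Mathlib

open Cardinal Set

/-- `A` is almost contained in `B`: `A \ B` is finite. -/
def ASub (A B : Set ℕ) : Prop := (A \ B).Finite

/-- A family is linearly quasiordered by `⊆*`. -/
def LinQO (F : Set (Set ℕ)) : Prop := ∀ A ∈ F, ∀ B ∈ F, ASub A B ∨ ASub B A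

/-- A centered family of infinite subsets of `ℕ`. -/
def Centered (F : Set (Set ℕ)) : Prop :=
  (∀ A ∈ F, A.Infinite) ∧
  ∀ G : Finset (Set ℕ), ↑G ⊆ F → G.Nonempty → (⋂ A ∈ G, A).Infinite

/-- `A` is a pseudo-intersection of `F`. -/
def PseudoInt (F : Set (Set ℕ)) (A : Set ℕ) : Prop :=
  A.Infinite ∧ ∀ B ∈ F, ASub A B

/-- The pseudo-intersection number 𝔭. -/
noncomputable def pNum : Cardinal :=
  sInf {c | ∃ F : Set (Set ℕ), Centered F ∧ (¬∃ A, PseudoInt F A) ∧ c = #F}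

/-- The tower number 𝔱. -/
noncomputable def tNum : Cardinal :=
  sInf {c | ∃ F : Set (Set ℕ), (∀ A ∈ F, A.Infinite) ∧ LinQO F ∧
    (¬∃ A, PseudoInt F A) ∧ c = #F}

/-- Eventual dominance `f ≤* g`. -/
def LeStar (f g : ℕ → ℕ) : Prop := {n | g n < f n}.Finite

def UnboundedFam (B : Set (ℕ → ℕ)) : Prop := ¬∃ g, ∀ f ∈ B, LeStar f g

def DominatingFam (D : Set (ℕ → ℕ)) : Prop := ∀ f, ∃ g ∈ D, LeStar f g

/-- The unbounding number 𝔟. -/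
noncomputable def bNum : Cardinal := sInf {c | ∃ B, UnboundedFam B ∧ c = #B}

/-- The dominating number 𝔡. -/
noncomputable def dNum : Cardinal := sInf {c | ∃ D, DominatingFam D ∧ c = #D}

def SplittingFam (S : Set (Set ℕ)) : Prop :=
  ∀ A : Set ℕ, A.Infinite → ∃ s ∈ S, (A ∩ s).Infinite ∧ (A \ s).Infinite

/-- The splitting number 𝔰. -/
noncomputable def sNum : Cardinal := sInf {c | ∃ S, SplittingFam S ∧ c = #S}

/-- `g` avoids middles in `X` with respect to `⟨R,S⟩`. -/
def AvoidsMiddles (R S : ℕ → ℕ → Prop) (g : ℕ → ℕ) (X : Set (ℕ → ℕ)) : Prop :=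
  (∀ f ∈ X, {n | R (f n) (g n)}.Infinite) ∧
  ∀ f ∈ X, ∀ h ∈ X,
    {n | R (f n) (g n) ∧ S (g n) (h n)}.Finite ∨
    {n | R (h n) (g n) ∧ S (g n) (f n)}.Finite

/-- The excluded middle property with respect to `⟨R,S⟩`. -/
def EMP (R S : ℕ → ℕ → Prop) (X : Set (ℕ → ℕ)) : Prop := ∃ g, AvoidsMiddles R S g X

/-- The cardinal 𝔵_{R,S}. -/
noncomputable def xNum (R S : ℕ → ℕ → Prop) : Cardinal :=
  sInf {c | ∃ X : Set (ℕ → ℕ), ¬ EMP R S X ∧ c = #X}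

/-- The class 𝔅 of bounded sets. -/
def ClB (Y : Set (ℕ → ℕ)) : Prop := ∃ g, ∀ f ∈ Y, LeStar f g

/-- The class 𝔛. -/
def ClX (Y : Set (ℕ → ℕ)) : Prop := EMP (· < ·) (· ≤ ·) Y

/-- `Y` is finitely dominating: `maxfin Y` is dominating. -/
def FinDominating (Y : Set (ℕ → ℕ)) : Prop :=
  ∀ f : ℕ → ℕ, ∃ F : Finset (ℕ → ℕ), ↑F ⊆ Y ∧ LeStar f (fun n => F.sup (fun h => h n))

/-- The class 𝔇fin of non finitely-dominating sets. -/
def ClDfin (Y : Set (ℕ → ℕ)) : Prop := ¬ FinDominating Y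

/-- The class 𝔇 of non-dominating sets. -/
def ClD (Y : Set (ℕ → ℕ)) : Prop := ¬ DominatingFam Y

/-- The additivity number add(I, J). -/
noncomputable def addNum (I J : Set (ℕ → ℕ) → Prop) : Cardinal :=
  sInf {c | ∃ Fam : Set (Set (ℕ → ℕ)), (∀ Y ∈ Fam, I Y) ∧ ¬ J (⋃₀ Fam) ∧ c = #Fam}

/-- The Boolean subalgebra of `P(ℕ)` generated by `F`. -/
def genBA (F : Set (Set ℕ)) : Set (Set ℕ) :=
  ⋂₀ {C | F ⊆ C ∧ Set.univ ∈ C ∧ (∀ A ∈ C, Aᶜ ∈ C) ∧ ∀ A ∈ C, ∀ B ∈ C, A ∩ B ∈ C}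

/-- A nonprincipal ultrafilter (every member is infinite). -/
def NonPrincipal (U : Ultrafilter ℕ) : Prop := ∀ S ∈ U, Set.Infinite S

/-- The cofinality of the reduced product `ℕ^ℕ/U`. -/
noncomputable def cofRP (U : Ultrafilter ℕ) : Cardinal :=
  sInf {c | ∃ C : Set (ℕ → ℕ), (∀ f : ℕ → ℕ, ∃ g ∈ C, {n | f n ≤ g n} ∈ U) ∧ c = #C}

/-- Auxiliary: next element of `S` at or after `k`. -/
noncomputable def nxt (S : Set ℕ) (k : ℕ) : ℕ := sInf {m | m ∈ S ∧ k ≤ m}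

lemma nxt_spec {S : Set ℕ} (hS : S.Infinite) (k : ℕ) : nxt S k ∈ S ∧ k ≤ nxt S k := by
  have hne : {m | m ∈ S ∧ k ≤ m}.Nonempty := by
    obtain ⟨b, hb, hkb⟩ := hS.exists_gt k
    exact ⟨b, hb, hkb.le⟩
  exact Nat.sInf_mem hne

lemma nxt_min {S : Set ℕ} {k m : ℕ} (hm : m ∈ S) (hkm : k ≤ m) : nxt S k ≤ m :=
  Nat.sInf_le ⟨hm, hkm⟩

lemma nxt_self {S : Set ℕ} {k : ℕ} (hk : k ∈ S) : nxt S k = k :=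
  le_antisymm (nxt_min hk le_rfl) (Nat.sInf_mem (⟨k, hk, le_rfl⟩ : {m | m ∈ S ∧ k ≤ m}.Nonempty)).2

/-- Auxiliary: cumulative maximum. -/
def cum (g : ℕ → ℕ) (n : ℕ) : ℕ := (Finset.range (n + 1)).sup g

lemma cum_mono (g : ℕ → ℕ) : Monotone (cum g) := fun a b h =>
  Finset.sup_mono (Finset.range_subset_range.2 (by omega))

lemma le_cum (g : ℕ → ℕ) {k n : ℕ} (h : k ≤ n) : g k ≤ cum g n :=
  Finset.le_sup (Finset.mem_range.2 (by omega))

/-- Auxiliary: the dominating function associated to `g` and `B`. -/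
noncomputable def dOf (g : ℕ → ℕ) (B : Set ℕ) : ℕ → ℕ :=
  fun k => cum g (nxt (B ∩ {n | 0 < g n}) k)

lemma dOf_key {g : ℕ → ℕ} {P Q : Set ℕ} (hP : P.Infinite) (hPQ : (P \ Q).Finite) :
    {k | cum g (nxt P k) < cum g k + 1 ∧ cum g k + 1 ≤ cum g (nxt Q k)}.Finite := by
  obtain ⟨N, hN⟩ := hPQ.bddAbove
  apply (Set.finite_Iic N).subset
  rintro k ⟨h1, h2⟩
  obtain ⟨hmP, hkm⟩ := nxt_spec hP k
  have hnot : nxt P k ∉ Q := by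
    intro hmem
    have h3 : nxt Q k ≤ nxt P k := nxt_min hmem hkm
    have h4 := cum_mono g h3
    omega
  exact le_trans hkm (hN ⟨hmP, hnot⟩)
theorem stmt16 (κ : Cardinal) :
    κ < addNum ClX ClD ↔
    ∀ (ι : Type) (_ : #ι = κ) (g : ι → ℕ → ℕ) (F : ι → Set (Set ℕ)),
      (∀ i, (∀ B ∈ F i, (B ∩ {n | 0 < g i n}).Infinite) ∧
        LinQO ((· ∩ {n | 0 < g i n}) '' F i)) →
      ∃ h : ℕ → ℕ, ∀ i, ∀ B ∈ F i, (B ∩ {n | g i n ≤ h n}).Infinite := by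
  constructor
  · -- forward direction
    intro hκ ι hι g F hyp
    by_contra hno
    push_neg at hno
    -- hno : ∀ h, ∃ i, ∃ B ∈ F i, (B ∩ {n | g i n ≤ h n}).Finite
    have hClX : ∀ i, ClX (dOf (g i) '' F i) := by
      intro i
      refine ⟨fun n => cum (g i) n + 1, ?_, ?_⟩
      · rintro f ⟨B, hB, rfl⟩
        have hinf : (B ∩ {n | 0 < g i n}).Infinite := (hyp i).1 B hB
        apply hinf.mono
        intro k hk
        simp only [Set.mem_setOf_eq, dOf, nxt_self hk]
        omega
      · rintro f ⟨B, hB, rfl⟩ f' ⟨C, hC, rfl⟩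
        have hBinf : (B ∩ {n | 0 < g i n}).Infinite := (hyp i).1 B hB
        have hCinf : (C ∩ {n | 0 < g i n}).Infinite := (hyp i).1 C hC
        have hBm : B ∩ {n | 0 < g i n} ∈ (· ∩ {n | 0 < g i n}) '' F i := ⟨B, hB, rfl⟩
        have hCm : C ∩ {n | 0 < g i n} ∈ (· ∩ {n | 0 < g i n}) '' F i := ⟨C, hC, rfl⟩
        rcases (hyp i).2 _ hBm _ hCm with hsub | hsub
        · left
          exact dOf_key hBinf hsub
        · right
          exact dOf_key hCinf hsub
    have hdom : DominatingFam (⋃₀ Set.range (fun i => dOf (g i) '' F i)) := by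
      intro f
      obtain ⟨i, B, hB, hfin⟩ := hno (cum f)
      refine ⟨dOf (g i) B, ⟨dOf (g i) '' F i, ⟨i, rfl⟩, ⟨B, hB, rfl⟩⟩, ?_⟩
      have hE : (B ∩ {n | 0 < g i n} ∩ {n | g i n ≤ cum f n}).Finite := by
        apply hfin.subset
        intro x hx
        exact ⟨hx.1.1, hx.2⟩
      obtain ⟨N, hN⟩ := hE.bddAbove
      have hBinf : (B ∩ {n | 0 < g i n}).Infinite := (hyp i).1 B hB
      apply (Set.finite_Iic N).subset
      intro k hk
      simp only [Set.mem_setOf_eq] at hk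
      simp only [Set.mem_Iic]
      by_contra hkN
      push_neg at hkN
      obtain ⟨hmP, hkm⟩ := nxt_spec hBinf k
      have hmE : cum f (nxt (B ∩ {n | 0 < g i n}) k) < g i (nxt (B ∩ {n | 0 < g i n}) k) := by
        by_contra hle
        push_neg at hle
        have h5 := hN (⟨hmP, hle⟩ :
          nxt (B ∩ {n | 0 < g i n}) k ∈ B ∩ {n | 0 < g i n} ∩ {n | g i n ≤ cum f n})
        omega
      have h1 : f k ≤ cum f (nxt (B ∩ {n | 0 < g i n}) k) := le_cum f hkm
      have h2 : g i (nxt (B ∩ {n | 0 < g i n}) k) ≤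
          cum (g i) (nxt (B ∩ {n | 0 < g i n}) k) := le_cum (g i) le_rfl
      have hk' : cum (g i) (nxt (B ∩ {n | 0 < g i n}) k) < f k := hk
      omega
    have hmem : #(Set.range (fun i => dOf (g i) '' F i)) ∈
        {c | ∃ Fam : Set (Set (ℕ → ℕ)), (∀ Y ∈ Fam, ClX Y) ∧ ¬ ClD (⋃₀ Fam) ∧ c = #Fam} := by
      refine ⟨Set.range (fun i => dOf (g i) '' F i), ?_, fun hc => hc hdom, rfl⟩
      rintro Z ⟨i, rfl⟩
      exact hClX i
    have h1 : addNum ClX ClD ≤ #(Set.range (fun i => dOf (g i) '' F i)) := csInf_le' hmem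
    have h2 : #(Set.range (fun i => dOf (g i) '' F i)) ≤ κ := hι ▸ Cardinal.mk_range_le
    exact absurd hκ (not_lt.2 (h1.trans h2))
  · -- backward direction
    intro hRHS
    have hS : {c | ∃ Fam : Set (Set (ℕ → ℕ)),
        (∀ Y ∈ Fam, ClX Y) ∧ ¬ ClD (⋃₀ Fam) ∧ c = #Fam}.Nonempty := by
      refine ⟨#(Set.range (fun f : ℕ → ℕ => ({f} : Set (ℕ → ℕ)))),
        Set.range (fun f : ℕ → ℕ => ({f} : Set (ℕ → ℕ))), ?_, ?_, rfl⟩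
      · rintro Z ⟨f, rfl⟩
        refine ⟨fun n => f n + 1, ?_, ?_⟩
        · rintro f' hf'
          rw [Set.mem_singleton_iff] at hf'
          subst hf'
          exact Set.infinite_univ.mono (fun n _ => Nat.lt_succ_self _)
        · rintro f1 hf1 f2 hf2
          rw [Set.mem_singleton_iff] at hf1 hf2
          subst hf1; subst hf2
          left
          apply Set.finite_empty.subset
          rintro n ⟨h1, h2⟩
          simp only [Set.mem_setOf_eq] at h1 h2
          omega
      · intro hc
        apply hc
        intro f
        refine ⟨f, ⟨{f}, ⟨f, rfl⟩, rfl⟩, ?_⟩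
        apply Set.finite_empty.subset
        rintro n hn
        simp only [Set.mem_setOf_eq] at hn
        omega
    obtain ⟨Fam, hX, hD, hc⟩ := csInf_mem hS
    rw [addNum, hc]
    have hdom : DominatingFam (⋃₀ Fam) := not_not.mp hD
    obtain ⟨u0, hu0, _⟩ := hdom id
    obtain ⟨Y0, hY0, _⟩ := hu0
    by_contra hlt
    push_neg at hlt
    have hι : #(Quotient.out κ) = κ := Cardinal.mk_out κ
    have hle : #(↥Fam) ≤ #(Quotient.out κ) := by rw [hι]; exact hlt
    obtain ⟨j⟩ := Cardinal.le_def _ _ |>.mp hle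
    haveI : Nonempty (Quotient.out κ) := ⟨j ⟨Y0, hY0⟩⟩
    haveI : Nonempty ↥Fam := ⟨⟨Y0, hY0⟩⟩
    have hσ : Function.Surjective (Function.invFun j) := Function.invFun_surjective j.injective
    set σ : Quotient.out κ → ↥Fam := Function.invFun j with hσdef
    have hwex : ∀ Z : ↥Fam, ∃ w : ℕ → ℕ, AvoidsMiddles (· < ·) (· ≤ ·) w Z :=
      fun Z => hX Z Z.2
    choose w hw using hwex
    have hsub0 : ∀ (i : Quotient.out κ),
        ∀ B ∈ (fun f => {n | f n < w (σ i) n}) '' (σ i : Set (ℕ → ℕ)),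
        B ⊆ {n | 0 < w (σ i) n} := by
      rintro i B ⟨f, hf, rfl⟩ n hn
      simp only [Set.mem_setOf_eq] at hn ⊢
      omega
    have hhyp : ∀ (i : Quotient.out κ),
        (∀ B ∈ (fun f => {n | f n < w (σ i) n}) '' (σ i : Set (ℕ → ℕ)),
          (B ∩ {n | 0 < w (σ i) n}).Infinite) ∧
        LinQO ((· ∩ {n | 0 < w (σ i) n}) ''
          ((fun f => {n | f n < w (σ i) n}) '' (σ i : Set (ℕ → ℕ)))) := by
      intro i
      constructor
      · intro B hB
        rw [Set.inter_eq_self_of_subset_left (hsub0 i B hB)]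
        obtain ⟨f, hf, rfl⟩ := hB
        exact (hw (σ i)).1 f hf
      · rintro A1 ⟨B1, hB1, rfl⟩ A2 ⟨B2, hB2, rfl⟩
        show ASub (B1 ∩ {n | 0 < w (σ i) n}) (B2 ∩ {n | 0 < w (σ i) n}) ∨
          ASub (B2 ∩ {n | 0 < w (σ i) n}) (B1 ∩ {n | 0 < w (σ i) n})
        rw [Set.inter_eq_self_of_subset_left (hsub0 i B1 hB1),
            Set.inter_eq_self_of_subset_left (hsub0 i B2 hB2)]
        obtain ⟨f1, hf1, rfl⟩ := hB1
        obtain ⟨f2, hf2, rfl⟩ := hB2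
        rcases (hw (σ i)).2 f1 hf1 f2 hf2 with hfin | hfin
        · left
          apply hfin.subset
          rintro n ⟨h1, h2⟩
          simp only [Set.mem_setOf_eq, Set.mem_diff] at h1 h2 ⊢
          exact ⟨h1, by omega⟩
        · right
          apply hfin.subset
          rintro n ⟨h1, h2⟩
          simp only [Set.mem_setOf_eq, Set.mem_diff] at h1 h2 ⊢
          exact ⟨h1, by omega⟩
    obtain ⟨h, hh⟩ := hRHS (Quotient.out κ) hι (fun i => w (σ i))
      (fun i => (fun f => {n | f n < w (σ i) n}) '' (σ i : Set (ℕ → ℕ))) hhyp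
    obtain ⟨u, hu, hLe⟩ := hdom h
    obtain ⟨Z, hZ, huZ⟩ := hu
    obtain ⟨i, hi⟩ := hσ ⟨Z, hZ⟩
    have hB : {n | u n < w (σ i) n} ∈ (fun f => {n | f n < w (σ i) n}) '' (σ i : Set (ℕ → ℕ)) :=
      ⟨u, by rw [hi]; exact huZ, rfl⟩
    have hinf := hh i _ hB
    apply hinf
    apply hLe.subset
    rintro n ⟨h1, h2⟩
    simp only [Set.mem_setOf_eq] at h1 h2 ⊢
    omega
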